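/- Let n ≥ 1, let f : ℝⁿ → ℝ be symmetric (invariant under all coordinate permutations) and concave on the probability simplex Ωₙ. Then for every n×n density matrix ρ and every pure state decomposition {(p_k, ψ_k)} of ρ, the average coherence satisfies Σ_k p_k · f(|ψ_k(0)|², …, |ψ_k(n−1)|²) ≤ f(ρ₀₀, ρ₁₁, …, ρ_{n−1,n−1}), where ρ_ii are the diagonal entries of ρ. (Theorem 1, inequality part.) -/

import Mathlib

open Matrix BigOperators
open scoped ComplexOrder

noncomputable section

/-- A symmetric function: invariant under all coordinate permutations. -/
def SymmetricFn {n : ℕ} (f : (Fin n → ℝ) → ℝ) : Prop :=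
  ∀ (σ : Equiv.Perm (Fin n)) (x : Fin n → ℝ), f (x ∘ σ) = f x

/-- A density matrix: positive semidefinite with trace one. -/
def IsDensityMatrix {n : ℕ} (ρ : Matrix (Fin n) (Fin n) ℂ) : Prop :=
  ρ.PosSemidef ∧ ρ.trace = 1

/-- The rank-one projection `ψ ψ*` associated to a vector `ψ ∈ ℂⁿ`. -/
def outer {n : ℕ} (ψ : Fin n → ℂ) : Matrix (Fin n) (Fin n) ℂ :=
  Matrix.vecMulVec ψ (fun i => starRingEnd ℂ (ψ i))

/-- `(p, ψ)` is a pure state decomposition of `ρ`. -/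
def IsDecomposition {n m : ℕ} (ρ : Matrix (Fin n) (Fin n) ℂ)
    (p : Fin m → ℝ) (ψ : Fin m → Fin n → ℂ) : Prop :=
  (∀ k, 0 ≤ p k) ∧ (∑ k, p k = 1) ∧ (∀ k, ∑ i, ‖ψ k i‖ ^ 2 = 1) ∧
    ρ = ∑ k, (p k : ℂ) • outer (ψ k)

/-- The coherence vector `(|ψ₀|², …, |ψ_{n-1}|²)` of a vector `ψ`. -/
def cohVec {n : ℕ} (ψ : Fin n → ℂ) : Fin n → ℝ := fun i => ‖ψ i‖ ^ 2

/-- The average coherence of a pure state decomposition with respect to `f`. -/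
def avgCoh {n m : ℕ} (f : (Fin n → ℝ) → ℝ) (p : Fin m → ℝ)
    (ψ : Fin m → Fin n → ℂ) : ℝ :=
  ∑ k, p k * f (cohVec (ψ k))

/-- Theorem 1 (inequality part): the average coherence of any pure state
decomposition of `ρ` is bounded above by `f(ρ₀₀, …, ρ_{n-1,n-1})`. -/
theorem avg_coherence_le_f_diag {n : ℕ} (hn : 1 ≤ n)
    (f : (Fin n → ℝ) → ℝ) (hsym : SymmetricFn f)
    (hconc : ConcaveOn ℝ (stdSimplex ℝ (Fin n)) f)
    (ρ : Matrix (Fin n) (Fin n) ℂ) (hρ : IsDensityMatrix ρ)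
    {m : ℕ} (p : Fin m → ℝ) (ψ : Fin m → Fin n → ℂ)
    (hdec : IsDecomposition ρ p ψ) :
    avgCoh f p ψ ≤ f (fun i => (ρ i i).re) := by
  obtain ⟨hp, hsum, hnorm, hρeq⟩ := hdec
  have hmem : ∀ k, cohVec (ψ k) ∈ stdSimplex ℝ (Fin n) := by
    intro k
    refine ⟨fun i => sq_nonneg _, ?_⟩
    simpa [cohVec] using hnorm k
  have hdiag : (fun i => (ρ i i).re) = ∑ k, p k • cohVec (ψ k) := by
    funext i
    rw [hρeq]
    simp only [Matrix.sum_apply, Matrix.smul_apply, outer, Matrix.vecMulVec_apply,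
      smul_eq_mul, Complex.mul_conj, Complex.re_sum, Finset.sum_apply,
      Pi.smul_apply, cohVec]
    refine Finset.sum_congr rfl fun k _ => ?_
    rw [← Complex.ofReal_mul]
    rw [Complex.ofReal_re, Complex.normSq_eq_norm_sq]
  have h := hconc.le_map_sum (fun k _ => hp k) hsum (fun k _ => hmem k)
  rw [hdiag]
  simpa [avgCoh, smul_eq_mul] using h
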